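/- Let X be a finite simplicial complex of dimension d, 0 < λ < 1. For σ, τ ∈ X, the maps φ^λ_σ and φ^λ_τ (defined by normalizing the truncated barycentric coordinates φ_λ(t_v(·))) coincide on cl ⟨σ⟩_λ ∩ cl ⟨τ⟩_λ. Consequently the formula φ(x) := φ^λ_σ(x) for any σ with x ∈ cl ⟨σ⟩_λ gives a well-defined continuous map φ : |X| → |X|, provided 0 < λ < 1/(d+1). -/
import Mathlib


/-- The truncated rescaling `φ_λ(t) = max(0, (t-λ)/(1-λ))`. -/
noncomputable def phiL (lam t : ℝ) : ℝ := max 0 ((t - lam) / (1 - lam))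

/-- The map `φ^λ_σ`, with values forced into `|σ|`. -/
noncomputable def phiSig {V : Type*} [Fintype V] [DecidableEq V] (lam : ℝ)
    (σ : Finset V) (x : V → ℝ) : V → ℝ :=
  fun v => if v ∈ σ then phiL lam (x v) / ∑ w, phiL lam (x w) else 0

/-- The global map `φ`, given by the same normalization formula. -/
noncomputable def phiGlob {V : Type*} [Fintype V] (lam : ℝ) (x : V → ℝ) : V → ℝ :=
  fun v => phiL lam (x v) / ∑ w, phiL lam (x w)

/-- The closed geometric simplex spanned by a set `s` of vertices. -/
def gsS {V : Type*} [Fintype V] (s : Set V) : Set (V → ℝ) :=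
  {x | (∀ v, 0 ≤ x v) ∧ (∀ v, v ∉ s → x v = 0) ∧ ∑ v, x v = 1}

/-- The geometric realization of a simplicial complex `K`. -/
def geomReal {V : Type*} [Fintype V] (K : Set (Finset V)) : Set (V → ℝ) :=
  ⋃ σ ∈ K, gsS (↑σ : Set V)

/-- The closure of the `λ`-cell of a simplex `σ` inside `|X|`. -/
def clLamCell {V : Type*} [Fintype V] (K : Set (Finset V)) (lam : ℝ)
    (σ : Finset V) : Set (V → ℝ) :=
  {x | x ∈ geomReal K ∧ (∀ v ∈ σ, lam ≤ x v) ∧ ∀ v ∉ σ, x v ≤ lam}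

lemma phiL_nonneg (lam t : ℝ) : 0 ≤ phiL lam t := le_max_left _ _

lemma phiL_eq_zero {lam t : ℝ} (h1 : lam < 1) (h : t ≤ lam) : phiL lam t = 0 :=
  max_eq_left (div_nonpos_of_nonpos_of_nonneg (by linarith) (by linarith))

lemma phiL_pos {lam t : ℝ} (h1 : lam < 1) (h : lam < t) : 0 < phiL lam t :=
  lt_max_iff.mpr (Or.inr (div_pos (by linarith) (by linarith)))

lemma lam_lt_one {d : ℕ} {lam : ℝ} (h1 : lam < 1 / (d + 1)) : lam < 1 := by
  have hd : (1:ℝ) ≤ (d:ℝ) + 1 := by have := Nat.cast_nonneg (α := ℝ) d; linarith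
  have : (1:ℝ) / (d + 1) ≤ 1 := by
    rw [div_le_one (by positivity)]; exact hd
  linarith

lemma exists_gt_lam {V : Type*} [Fintype V] {s : Finset V} {x : V → ℝ}
    {lam : ℝ} {d : ℕ} (hx : x ∈ gsS (s : Set V)) (hcard : s.card ≤ d + 1)
    (h0 : 0 < lam) (h1 : lam < 1 / (d + 1)) : ∃ v ∈ s, lam < x v := by
  by_contra h
  push_neg at h
  obtain ⟨hpos, hsupp, hsum⟩ := hx
  have hsum' : ∑ v ∈ s, x v = 1 := by
    rw [← hsum]
    exact Finset.sum_subset s.subset_univ (fun v _ hv => hsupp v hv)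
  have hle : (1:ℝ) ≤ s.card * lam := by
    rw [← hsum']
    calc ∑ v ∈ s, x v ≤ ∑ _v ∈ s, lam := Finset.sum_le_sum (fun v hv => h v hv)
      _ = s.card * lam := by rw [Finset.sum_const, nsmul_eq_mul]
  have hd : (s.card : ℝ) ≤ (d:ℝ) + 1 := by exact_mod_cast hcard
  have hdpos : (0:ℝ) < (d:ℝ) + 1 := by
    have := Nat.cast_nonneg (α := ℝ) d; linarith
  have h1' : lam * ((d:ℝ) + 1) < 1 := (lt_div_iff₀ hdpos).mp h1
  have hmul : (s.card : ℝ) * lam ≤ ((d:ℝ) + 1) * lam :=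
    mul_le_mul_of_nonneg_right hd h0.le
  nlinarith

lemma sum_phiL_pos {V : Type*} [Fintype V] {K : Set (Finset V)} {d : ℕ}
    (hdim : ∀ σ ∈ K, σ.card ≤ d + 1) {lam : ℝ} (h0 : 0 < lam)
    (h1 : lam < 1 / (d + 1)) {x : V → ℝ} (hx : x ∈ geomReal K) :
    0 < ∑ w, phiL lam (x w) := by
  obtain ⟨s, hsK, hxs⟩ := by simpa [geomReal] using hx
  obtain ⟨v, hv, hlt⟩ := exists_gt_lam hxs (hdim s hsK) h0 h1
  exact Finset.sum_pos' (fun w _ => phiL_nonneg _ _)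
    ⟨v, Finset.mem_univ v, phiL_pos (lam_lt_one h1) hlt⟩

lemma phiSig_eq_phiGlob {V : Type*} [Fintype V] [DecidableEq V]
    {K : Set (Finset V)} {d : ℕ} (hdim : ∀ σ ∈ K, σ.card ≤ d + 1)
    {lam : ℝ} (h0 : 0 < lam) (h1 : lam < 1 / (d + 1)) {σ : Finset V}
    {x : V → ℝ} (hx : x ∈ clLamCell K lam σ) : phiSig lam σ x = phiGlob lam x := by
  funext v
  by_cases hv : v ∈ σ
  · simp [phiSig, phiGlob, hv]
  · have hz : phiL lam (x v) = 0 := phiL_eq_zero (lam_lt_one h1) (hx.2.2 v hv)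
    simp [phiSig, phiGlob, hv, hz]

/-- for `0 < λ < 1/(d+1)`, the maps `φ^λ_σ` and `φ^λ_τ` coincide
on `cl ⟨σ⟩_λ ∩ cl ⟨τ⟩_λ`, `φ^λ_σ` agrees with the global formula `φ` on
`cl ⟨σ⟩_λ`, and `φ` is a well-defined (maps `|X|` into `|X|`) continuous map
on `|X|`. -/
theorem phi_global_wellDefined {V : Type*} [Fintype V] [DecidableEq V]
    (K : Set (Finset V)) (d : ℕ)
    (hne : ∀ σ ∈ K, σ.Nonempty)
    (hK : ∀ σ ∈ K, ∀ τ : Finset V, τ ⊆ σ → τ.Nonempty → τ ∈ K)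
    (hdim : ∀ σ ∈ K, σ.card ≤ d + 1)
    (lam : ℝ) (h0 : 0 < lam) (h1 : lam < 1 / (d + 1)) :
    (∀ σ ∈ K, ∀ τ ∈ K, Set.EqOn (phiSig lam σ) (phiSig lam τ)
        (clLamCell K lam σ ∩ clLamCell K lam τ)) ∧
    (∀ σ ∈ K, Set.EqOn (phiSig lam σ) (phiGlob lam) (clLamCell K lam σ)) ∧
    Set.MapsTo (phiGlob lam) (geomReal K) (geomReal K) ∧
    ContinuousOn (phiGlob lam : (V → ℝ) → (V → ℝ)) (geomReal K) := by
  have hgt : ∀ σ ∈ K, Set.EqOn (phiSig lam σ) (phiGlob lam) (clLamCell K lam σ) :=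
    fun σ _ x hx => phiSig_eq_phiGlob hdim h0 h1 hx
  refine ⟨fun σ hσ τ hτ x hx => ?_, hgt, ?_, ?_⟩
  · rw [hgt σ hσ hx.1, hgt τ hτ hx.2]
  · intro x hx
    obtain ⟨s, hsK, hxs⟩ := by simpa [geomReal] using hx
    have hspos := sum_phiL_pos hdim h0 h1 hx
    obtain ⟨v, hv, hlt⟩ := exists_gt_lam hxs (hdim s hsK) h0 h1
    set τ : Finset V := s.filter (fun v => lam < x v) with hτ
    have hτK : τ ∈ K := hK s hsK τ (Finset.filter_subset _ _)
      ⟨v, Finset.mem_filter.mpr ⟨hv, hlt⟩⟩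
    refine Set.mem_biUnion hτK ⟨fun w => div_nonneg (phiL_nonneg _ _) hspos.le,
      fun w hw => ?_, ?_⟩
    · have hwle : x w ≤ lam := by
        by_contra hgt'
        push_neg at hgt'
        by_cases hws : w ∈ s
        · exact hw (Finset.mem_coe.mpr (Finset.mem_filter.mpr ⟨hws, hgt'⟩))
        · have := hxs.2.1 w hws
          linarith
      simp [phiGlob, phiL_eq_zero (lam_lt_one h1) hwle]
    · simp only [phiGlob]
      rw [← Finset.sum_div, div_self hspos.ne']
  · refine continuousOn_pi.mpr fun v => ContinuousOn.div ?_ ?_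
      (fun x hx => (sum_phiL_pos hdim h0 h1 hx).ne')
    · exact (continuous_const.max
        (((continuous_apply v).sub continuous_const).div_const _)).continuousOn
    · exact (continuous_finset_sum _ fun w _ => continuous_const.max
        (((continuous_apply w).sub continuous_const).div_const _)).continuousOn
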